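/- For every integer n ≥ 1, the sum over all π ∈ 𝓕_n of trun(π) − 1 equals (3^(n−1) − 1)/2; equivalently, 2·Σ_{π ∈ 𝓕_n} (trun(π) − 1) = 3^(n−1) − 1. -/

import Mathlib

open scoped BigOperators

/-- `w` is a Catalan word: it is nonempty, starts with `1`, and each subsequent
letter lies between `1` and the previous letter plus one. -/
def IsCatalan (w : List ℕ) : Prop :=
  w ≠ [] ∧ w.getD 0 0 = 1 ∧
    ∀ i, i + 1 < w.length →
      1 ≤ w.getD (i + 1) 0 ∧ w.getD (i + 1) 0 ≤ w.getD i 0 + 1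

/-- `i` is the starting index of a maximal weakly increasing run of `w`. -/
def RunStart (w : List ℕ) (i : ℕ) : Prop :=
  i < w.length ∧ (i = 0 ∨ w.getD i 0 < w.getD (i - 1) 0)

/-- `w` is flattened: the first letters of its increasing runs, read left to
right, form a weakly nondecreasing sequence. -/
def IsFlattened (w : List ℕ) : Prop :=
  ∀ i j, RunStart w i → RunStart w j → i ≤ j → w.getD i 0 ≤ w.getD j 0

/-- The set of flattened Catalan words of length `n`. -/
def FlatCat (n : ℕ) : Set (List ℕ) :=
  {w | w.length = n ∧ IsCatalan w ∧ IsFlattened w}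

/-- `i` is the starting index of an occurrence of the consecutive pattern `τ`
in the word `w`, i.e. the factor of `w` of length `|τ|` starting at `i` is
order-isomorphic to `τ`. -/
def OccAt (τ w : List ℕ) (i : ℕ) : Prop :=
  i + τ.length ≤ w.length ∧
    ∀ s < τ.length, ∀ t < τ.length,
      (w.getD (i + s) 0 < w.getD (i + t) 0 ↔ τ.getD s 0 < τ.getD t 0)

/-- The number of occurrences of the consecutive pattern `τ` in `w`. -/
noncomputable def numOcc (τ w : List ℕ) : ℕ :=
  Set.ncard {i | OccAt τ w i}

/-- The number of distinct letters in the terminal (rightmost) increasing run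
of `w`, i.e. in the longest weakly increasing suffix of `w`. -/
noncomputable def trun (w : List ℕ) : ℕ :=
  ((w.drop (sInf {i | List.Chain' (· ≤ ·) (w.drop i)})).toFinset).card

/-- The total number of occurrences of the consecutive pattern `τ` over all
flattened Catalan words of length `n`. -/
noncomputable def tot (n : ℕ) (τ : List ℕ) : ℕ :=
  ∑ᶠ w ∈ FlatCat n, numOcc τ w

-- === auxiliary ===

noncomputable def lrs (w : List ℕ) : ℕ := sInf {i | List.Chain' (· ≤ ·) (w.drop i)}

def ll (w : List ℕ) : ℕ := w.getD (w.length - 1) 0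

noncomputable def aa (w : List ℕ) : ℕ := w.getD (lrs w) 0

lemma trun_def (w : List ℕ) : trun w = ((w.drop (lrs w)).toFinset).card := rfl

lemma getD_eq (w : List ℕ) (i : ℕ) (h : i < w.length) : w.getD i 0 = w[i] :=
  List.getD_eq_getElem _ _ h

lemma chain'_drop {R : ℕ → ℕ → Prop} {w : List ℕ} (h : List.Chain' R w) (i : ℕ) :
    List.Chain' R (w.drop i) := by
  simp only [List.Chain', List.isChain_iff_getElem] at h ⊢
  intro j hj
  simp only [List.get_eq_getElem, List.getElem_drop]
  have hlen : (w.drop i).length = w.length - i := List.length_drop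
  have h2 := h (i + j) (by omega)
  exact h2

lemma chain_drop_upward {w : List ℕ} {i j : ℕ} (hij : i ≤ j)
    (h : List.Chain' (· ≤ ·) (w.drop i)) : List.Chain' (· ≤ ·) (w.drop j) := by
  have : w.drop j = (w.drop i).drop (j - i) := by
    rw [List.drop_drop]; congr 1; omega
  rw [this]; exact chain'_drop h _

lemma chain'_short (u : List ℕ) (h : u.length ≤ 1) : List.Chain' (· ≤ ·) u := by
  match u with
  | [] => exact List.isChain_nil
  | [a] => exact List.isChain_singleton a
  | a :: b :: t => simp at h

lemma lrs_lt_length {w : List ℕ} (h : w ≠ []) : lrs w < w.length := by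
  have hlen : 0 < w.length := List.length_pos_iff.2 h
  have hmem : (w.length - 1) ∈ {i | List.Chain' (· ≤ ·) (w.drop i)} :=
    chain'_short _ (by rw [List.length_drop]; omega)
  have := Nat.sInf_le hmem
  unfold lrs; omega

lemma chain_drop_lrs (w : List ℕ) : List.Chain' (· ≤ ·) (w.drop (lrs w)) := by
  have h : lrs w ∈ {i | List.Chain' (· ≤ ·) (w.drop i)} := by
    apply Nat.sInf_mem
    exact ⟨w.length, show List.Chain' (· ≤ ·) (w.drop w.length) by
      rw [List.drop_length]; exact List.isChain_nil⟩
  exact h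

lemma lrs_eq {w : List ℕ} {k : ℕ} (hk : List.Chain' (· ≤ ·) (w.drop k))
    (hk' : k = 0 ∨ ¬ List.Chain' (· ≤ ·) (w.drop (k - 1))) : lrs w = k := by
  have hle : lrs w ≤ k := Nat.sInf_le hk
  rcases hk' with h0 | hnc
  · omega
  · by_contra hne
    exact hnc (chain_drop_upward (by omega) (chain_drop_lrs w))

lemma runStart_lrs {w : List ℕ} (h : w ≠ []) : RunStart w (lrs w) := by
  refine ⟨lrs_lt_length h, ?_⟩
  by_cases h0 : lrs w = 0
  · exact Or.inl h0
  · right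
    have hlt := lrs_lt_length h
    have h1 : lrs w - 1 ∉ {i | List.Chain' (· ≤ ·) (w.drop i)} :=
      Nat.notMem_of_lt_sInf (show lrs w - 1 < lrs w by omega)
    have hdrop : w.drop (lrs w - 1) = w[lrs w - 1] :: w.drop (lrs w) := by
      have := List.drop_eq_getElem_cons (l := w) (i := lrs w - 1) (by omega)
      rw [this]; congr 2; omega
    rw [getD_eq _ _ hlt, getD_eq _ _ (by omega)]
    by_contra hle
    push_neg at hle
    apply h1
    show List.Chain' (· ≤ ·) _
    rw [hdrop]
    simp only [List.Chain', List.isChain_cons]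
    refine ⟨?_, chain_drop_lrs w⟩
    intro y hy
    rw [List.head?_drop] at hy
    have : w[lrs w]? = some w[lrs w] := List.getElem?_eq_getElem hlt
    rw [this] at hy
    simp at hy
    omega
-- === Catalan basics ===

lemma cat_ge_one {w : List ℕ} (hc : IsCatalan w) {i : ℕ} (hi : i < w.length) :
    1 ≤ w.getD i 0 := by
  cases i with
  | zero => rw [hc.2.1]
  | succ j => exact (hc.2.2 j hi).1

lemma cat_le_succ {w : List ℕ} (hc : IsCatalan w) : ∀ i, i < w.length → w.getD i 0 ≤ i + 1 := by
  intro i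
  induction i with
  | zero => intro h; rw [hc.2.1]
  | succ j ih => intro h; have := (hc.2.2 j h).2; have := ih (by omega); omega

lemma cat_step {w : List ℕ} (hc : IsCatalan w) {i : ℕ} (hi : i + 1 < w.length) :
    w[i + 1] ≤ w[i] + 1 := by
  have := (hc.2.2 i hi).2
  rwa [getD_eq _ _ hi, getD_eq _ _ (by omega)] at this

lemma run_chain {w : List ℕ} (hc : IsCatalan w) :
    List.Chain' (fun x y => x ≤ y ∧ y ≤ x + 1) (w.drop (lrs w)) := by
  have h1 := chain_drop_lrs w
  simp only [List.Chain', List.isChain_iff_getElem] at h1 ⊢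
  intro i hi
  refine ⟨h1 i hi, ?_⟩
  simp only [List.get_eq_getElem, List.getElem_drop]
  have hlen : (w.drop (lrs w)).length = w.length - lrs w := List.length_drop
  exact cat_step (i := lrs w + i) hc (by omega)

lemma run_toFinset_aux : ∀ (u : List ℕ) (a : ℕ),
    List.Chain' (fun x y => x ≤ y ∧ y ≤ x + 1) (a :: u) →
    (a :: u).toFinset = Finset.Icc a ((a :: u).getLast (by simp)) := by
  intro u
  induction u with
  | nil => intro a _; simp
  | cons b v ih =>
    intro a hch
    simp only [List.Chain', List.isChain_cons_cons] at hch
    obtain ⟨⟨hab, hba⟩, hch2⟩ := hch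
    have hL : (a :: b :: v).getLast (by simp) = (b :: v).getLast (by simp) := by
      rw [List.getLast_cons]
    have ihv := ih b hch2
    have hbL : b ≤ (b :: v).getLast (by simp) := by
      have : (b :: v).getLast (by simp) ∈ (b :: v).toFinset := by
        rw [List.mem_toFinset]; exact List.getLast_mem _
      rw [ihv, Finset.mem_Icc] at this
      exact this.1
    rw [hL]
    have : (a :: b :: v).toFinset = insert a ((b :: v).toFinset) := by simp
    rw [this, ihv]
    ext x
    simp only [Finset.mem_insert, Finset.mem_Icc]
    omega

lemma drop_getLast (w : List ℕ) (m : ℕ) (hm : m < w.length) (u : List ℕ)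
    (hu : w.drop m = u) (hune : u ≠ []) : u.getLast hune = ll w := by
  subst hu
  rw [List.getLast_eq_getElem, ll, getD_eq _ _ (by omega)]
  have hlen : (w.drop m).length = w.length - m := List.length_drop
  have h2 : (w.drop m)[(w.drop m).length - 1]'(by omega) =
      w[m + ((w.drop m).length - 1)] := List.getElem_drop
  rw [h2]; congr 1; omega

lemma run_toFinset {w : List ℕ} (hne : w ≠ []) (hc : IsCatalan w) :
    (w.drop (lrs w)).toFinset = Finset.Icc (aa w) (ll w) := by
  have hlt := lrs_lt_length hne
  have hdrop : w.drop (lrs w) = w[lrs w] :: w.drop (lrs w + 1) :=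
    List.drop_eq_getElem_cons hlt
  have hch := run_chain hc
  rw [hdrop] at hch ⊢
  rw [run_toFinset_aux _ _ hch]
  have e1 : aa w = w[lrs w]'hlt := by rw [aa, getD_eq _ _ hlt]
  have e2 : ((w[lrs w]'hlt) :: w.drop (lrs w + 1)).getLast (List.cons_ne_nil _ _) = ll w :=
    drop_getLast w (lrs w) hlt _ hdrop (List.cons_ne_nil _ _)
  rw [e1, e2]

lemma trun_eq {w : List ℕ} (hne : w ≠ []) (hc : IsCatalan w) :
    trun w = ll w + 1 - aa w := by
  rw [trun_def, run_toFinset hne hc, Nat.card_Icc]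

lemma aa_le_ll {w : List ℕ} (hne : w ≠ []) (hc : IsCatalan w) : aa w ≤ ll w := by
  have h : ll w ∈ Finset.Icc (aa w) (ll w) := by
    rw [← run_toFinset hne hc, List.mem_toFinset]
    have hlt := lrs_lt_length hne
    have hne' : w.drop (lrs w) ≠ [] := by
      apply List.ne_nil_of_length_pos; rw [List.length_drop]; omega
    rw [← drop_getLast w (lrs w) hlt _ rfl hne']
    exact List.getLast_mem _
  exact (Finset.mem_Icc.1 h).1

lemma one_le_aa {w : List ℕ} (hne : w ≠ []) (hc : IsCatalan w) : 1 ≤ aa w :=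
  cat_ge_one hc (lrs_lt_length hne)
-- === append index lemmas ===

lemma getD_append_lt (π : List ℕ) (c : ℕ) {i : ℕ} (h : i < π.length) :
    (π ++ [c]).getD i 0 = π.getD i 0 := by
  rw [getD_eq _ _ (by rw [List.length_append]; simp; omega), getD_eq _ _ h]
  exact List.getElem_append_left h

lemma getD_append_self (π : List ℕ) (c : ℕ) :
    (π ++ [c]).getD π.length 0 = c := by
  rw [getD_eq _ _ (by rw [List.length_append]; simp)]
  exact List.getElem_concat_length rfl _

lemma len_append (π : List ℕ) (c : ℕ) : (π ++ [c]).length = π.length + 1 := by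
  rw [List.length_append]; simp

lemma runStart_append_iff (π : List ℕ) (c : ℕ) {i : ℕ} (h : i < π.length) :
    RunStart (π ++ [c]) i ↔ RunStart π i := by
  unfold RunStart
  rw [len_append, getD_append_lt π c h, getD_append_lt π c (show i - 1 < π.length by omega)]
  constructor
  · rintro ⟨-, h2⟩; exact ⟨h, h2⟩
  · rintro ⟨-, h2⟩; exact ⟨by omega, h2⟩

lemma runStart_le_lrs {π : List ℕ} {i : ℕ} (h : RunStart π i) : i ≤ lrs π := by
  by_contra hlt
  push_neg at hlt
  obtain ⟨hilen, h2⟩ := h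
  rcases h2 with h0 | hdesc
  · omega
  · have hch := chain_drop_lrs π
    simp only [List.Chain', List.isChain_iff_getElem] at hch
    have hlen : (π.drop (lrs π)).length = π.length - lrs π := List.length_drop
    have := hch (i - 1 - lrs π) (by omega)
    simp only [List.get_eq_getElem, List.getElem_drop] at this
    simp only [show lrs π + (i - 1 - lrs π) = i - 1 from by omega,
      show i - 1 - lrs π + 1 = i - lrs π from by omega,
      show lrs π + (i - lrs π) = i from by omega] at this
    rw [getD_eq _ _ hilen, getD_eq _ _ (by omega : i - 1 < π.length)] at hdesc
    omega

lemma runStart_val_le_aa {π : List ℕ} (hne : π ≠ []) (hf : IsFlattened π) {i : ℕ}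
    (h : RunStart π i) : π.getD i 0 ≤ aa π :=
  hf i (lrs π) h (runStart_lrs hne) (runStart_le_lrs h)

-- === extension characterization ===

lemma ext_mem_iff {n : ℕ} (hn : 1 ≤ n) {π : List ℕ} (hπ : π ∈ FlatCat n) (c : ℕ) :
    (π ++ [c]) ∈ FlatCat (n + 1) ↔ aa π ≤ c ∧ c ≤ ll π + 1 := by
  obtain ⟨hlen, hcat, hflat⟩ := hπ
  have hne : π ≠ [] := by intro h; rw [h] at hlen; simp at hlen; omega
  have hL : π.length = n := hlen
  constructor
  · rintro ⟨hlen', hcat', hflat'⟩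
    constructor
    · by_cases hcl : ll π ≤ c
      · exact le_trans (aa_le_ll hne hcat) hcl
      · push_neg at hcl
        have hrsL : RunStart (π ++ [c]) π.length := by
          refine ⟨by rw [len_append]; omega, Or.inr ?_⟩
          rw [getD_append_self, getD_append_lt π c (show π.length - 1 < π.length by omega)]
          exact hcl
        have hrs0 : RunStart (π ++ [c]) (lrs π) :=
          (runStart_append_iff π c (lrs_lt_length hne)).2 (runStart_lrs hne)
        have := hflat' (lrs π) π.length hrs0 hrsL (le_of_lt (lrs_lt_length hne))
        rwa [getD_append_lt π c (lrs_lt_length hne), getD_append_self] at this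
    · have := hcat'.2.2 (π.length - 1) (by rw [len_append]; omega)
      have e1 : π.length - 1 + 1 = π.length := by omega
      rw [e1, getD_append_self, getD_append_lt π c (show π.length - 1 < π.length by omega)] at this
      exact this.2
  · rintro ⟨ha, hb⟩
    have haa := one_le_aa hne hcat
    refine ⟨by rw [len_append]; omega, ⟨by simp, ?_, ?_⟩, ?_⟩
    · rw [getD_append_lt π c (by omega)]
      exact hcat.2.1
    · intro i hi
      rw [len_append] at hi
      by_cases hilt : i + 1 < π.length
      · rw [getD_append_lt π c hilt, getD_append_lt π c (by omega)]
        exact hcat.2.2 i hilt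
      · have hieq : i + 1 = π.length := by omega
        rw [hieq, getD_append_self, getD_append_lt π c (by omega)]
        have : π.getD i 0 = ll π := by rw [ll]; congr 1; omega
        rw [this]
        exact ⟨by omega, hb⟩
    · intro i j hi hj hij
      have hjlen : j < π.length + 1 := by have := hj.1; rw [len_append] at this; exact this
      by_cases hjlt : j < π.length
      · have hilt : i < π.length := by omega
        rw [getD_append_lt π c hilt, getD_append_lt π c hjlt]
        exact hflat i j ((runStart_append_iff π c hilt).1 hi)
          ((runStart_append_iff π c hjlt).1 hj) hij
      · have hjeq : j = π.length := by omega
        subst hjeq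
        by_cases hieq : i = π.length
        · subst hieq; exact le_refl _
        · have hilt : i < π.length := by omega
          rw [getD_append_lt π c hilt, getD_append_self]
          have : π.getD i 0 ≤ aa π :=
            runStart_val_le_aa hne hflat ((runStart_append_iff π c hilt).1 hi)
          omega

-- === dropLast ===

lemma dropLast_mem {n : ℕ} (hn : 1 ≤ n) {w : List ℕ} (hw : w ∈ FlatCat (n + 1)) :
    w.dropLast ∈ FlatCat n ∧ w = w.dropLast ++ [ll w] := by
  obtain ⟨hlen, hcat, hflat⟩ := hw
  have hne : w ≠ [] := by intro h; rw [h] at hlen; simp at hlen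
  have hdl : w.dropLast.length = n := by rw [List.length_dropLast]; omega
  have hg : ∀ i, i < n → w.dropLast.getD i 0 = w.getD i 0 := by
    intro i hi
    rw [getD_eq _ _ (by omega), getD_eq _ _ (by omega)]
    exact List.getElem_dropLast _
  have hrs : ∀ i, i < n → (RunStart w.dropLast i ↔ RunStart w i) := by
    intro i hi
    unfold RunStart
    rw [hdl, hlen, hg i hi, hg (i - 1) (by omega)]
    constructor
    · rintro ⟨-, h2⟩; exact ⟨by omega, h2⟩
    · rintro ⟨-, h2⟩; exact ⟨hi, h2⟩
  constructor
  · refine ⟨hdl, ⟨?_, ?_, ?_⟩, ?_⟩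
    · intro h; rw [h] at hdl; simp at hdl; omega
    · rw [hg 0 (by omega)]; exact hcat.2.1
    · intro i hi
      rw [hdl] at hi
      rw [hg (i + 1) (by omega), hg i (by omega)]
      exact hcat.2.2 i (by omega)
    · intro i j hi hj hij
      have hi' : i < n := by have := hi.1; omega
      have hj' : j < n := by have := hj.1; omega
      rw [hg i hi', hg j hj']
      exact hflat i j ((hrs i hi').1 hi) ((hrs j hj').1 hj) hij
  · have : ll w = w.getLast hne := by
      rw [List.getLast_eq_getElem, ll, getD_eq _ _ (by omega)]
    rw [this, List.dropLast_append_getLast]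
-- === trun of extensions ===

lemma drop_append_sing (π : List ℕ) (c : ℕ) {k : ℕ} (h : k ≤ π.length) :
    (π ++ [c]).drop k = π.drop k ++ [c] :=
  List.drop_append_of_le_length h

lemma lrs_ext_low {π : List ℕ} (hne : π ≠ []) (hc : IsCatalan π) {c : ℕ}
    (hcl : c < ll π) : lrs (π ++ [c]) = π.length := by
  apply lrs_eq
  · rw [drop_append_sing π c (le_refl _), List.drop_length]
    exact List.isChain_singleton c
  · right
    intro hch
    have h1 : π.length - 1 ≤ π.length := by omega
    rw [drop_append_sing π c h1] at hch
    have hlen : 0 < π.length := List.length_pos_iff.2 hne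
    have hdrop : π.drop (π.length - 1) = [π[π.length - 1]'(by omega)] := by
      have h2 := List.drop_eq_getElem_cons (l := π) (i := π.length - 1) (by omega)
      rw [h2]
      have : π.length - 1 + 1 = π.length := by omega
      rw [this, List.drop_length]
    rw [hdrop] at hch
    simp only [List.cons_append, List.nil_append, List.Chain', List.isChain_pair] at hch
    rw [ll, getD_eq _ _ (by omega)] at hcl
    omega

lemma trun_ext_low {π : List ℕ} (hne : π ≠ []) (hc : IsCatalan π) {c : ℕ}
    (hcl : c < ll π) : trun (π ++ [c]) = 1 := by
  rw [trun_def, lrs, ← lrs]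
  rw [lrs_ext_low hne hc hcl, drop_append_sing π c (le_refl _), List.drop_length]
  simp

lemma lrs_ext_high {π : List ℕ} (hne : π ≠ []) (hc : IsCatalan π) {c : ℕ}
    (hcl : ll π ≤ c) : lrs (π ++ [c]) = lrs π := by
  have hlt := lrs_lt_length hne
  have hne' : π.drop (lrs π) ≠ [] := by
    apply List.ne_nil_of_length_pos; rw [List.length_drop]; omega
  apply lrs_eq
  · rw [drop_append_sing π c (by omega)]
    simp only [List.Chain', List.isChain_append]
    refine ⟨chain_drop_lrs π, by simp, ?_⟩
    intro x hx y hy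
    rw [List.getLast?_eq_getLast hne', drop_getLast π (lrs π) hlt _ rfl hne'] at hx
    simp at hx hy
    omega
  · by_cases h0 : lrs π = 0
    · exact Or.inl h0
    · right
      intro hch
      rw [drop_append_sing π c (by omega)] at hch
      simp only [List.Chain', List.isChain_append] at hch
      have h1 : lrs π - 1 ∉ {i | List.Chain' (· ≤ ·) (π.drop i)} :=
        Nat.notMem_of_lt_sInf (show lrs π - 1 < lrs π by omega)
      exact h1 hch.1

lemma aa_ext_high {π : List ℕ} (hne : π ≠ []) (hc : IsCatalan π) {c : ℕ}
    (hcl : ll π ≤ c) : aa (π ++ [c]) = aa π := by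
  rw [aa, lrs_ext_high hne hc hcl, getD_append_lt π c (lrs_lt_length hne), aa]

lemma ll_ext (π : List ℕ) (c : ℕ) : ll (π ++ [c]) = c := by
  rw [ll, len_append]
  simp only [Nat.add_sub_cancel]
  exact getD_append_self π c

lemma trun_ext_high {π : List ℕ} (hne : π ≠ []) (hc : IsCatalan π) {c : ℕ}
    (hcl : ll π ≤ c) (hcat' : IsCatalan (π ++ [c])) :
    trun (π ++ [c]) = c + 1 - aa π := by
  rw [trun_eq (by simp) hcat', ll_ext, aa_ext_high hne hc hcl]
-- === finiteness ===

lemma flatCat_finite (n : ℕ) : (FlatCat n).Finite := by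
  classical
  let f : List ℕ → (Fin n → Fin (n + 2)) := fun w i => ⟨min (w.getD i.1 0) (n + 1), by omega⟩
  apply Set.Finite.of_finite_image (f := f)
  · exact Set.Finite.subset Set.finite_univ (Set.subset_univ _)
  · intro u hu v hv huv
    obtain ⟨hul, hucat, -⟩ := hu
    obtain ⟨hvl, hvcat, -⟩ := hv
    apply List.ext_getElem (by rw [hul, hvl])
    intro i h1 h2
    have hiu : u.getD i 0 ≤ n := by
      have := cat_le_succ hucat i h1; omega
    have hiv : v.getD i 0 ≤ n := by
      have := cat_le_succ hvcat i h2; omega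
    have := congrFun huv ⟨i, by omega⟩
    simp only [f] at this
    have hval : min (u.getD i 0) (n + 1) = min (v.getD i 0) (n + 1) := by
      exact congrArg Fin.val this
    rw [← getD_eq _ _ h1, ← getD_eq _ _ h2]
    omega

noncomputable def FCS (n : ℕ) : Finset (List ℕ) := (flatCat_finite n).toFinset

lemma mem_FCS {n : ℕ} {w : List ℕ} : w ∈ FCS n ↔ w ∈ FlatCat n :=
  Set.Finite.mem_toFinset _

-- === decomposition ===

lemma FCS_succ {n : ℕ} (hn : 1 ≤ n) :
    FCS (n + 1) = (FCS n).biUnion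
      (fun π => (Finset.Icc (aa π) (ll π + 1)).image (fun c => π ++ [c])) := by
  classical
  ext w
  rw [mem_FCS, Finset.mem_biUnion]
  constructor
  · intro hw
    obtain ⟨hπ, hweq⟩ := dropLast_mem hn hw
    refine ⟨w.dropLast, mem_FCS.2 hπ, ?_⟩
    rw [Finset.mem_image]
    refine ⟨ll w, ?_, hweq.symm⟩
    rw [Finset.mem_Icc]
    exact (ext_mem_iff hn hπ (ll w)).1 (by rw [← hweq]; exact hw)
  · rintro ⟨π, hπ, hc⟩
    rw [Finset.mem_image] at hc
    obtain ⟨c, hcmem, rfl⟩ := hc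
    rw [Finset.mem_Icc] at hcmem
    exact (ext_mem_iff hn (mem_FCS.1 hπ) c).2 hcmem

lemma sum_FCS_succ {n : ℕ} (hn : 1 ≤ n) (g : List ℕ → ℕ) :
    ∑ w ∈ FCS (n + 1), g w
      = ∑ π ∈ FCS n, ∑ c ∈ Finset.Icc (aa π) (ll π + 1), g (π ++ [c]) := by
  classical
  rw [FCS_succ hn]
  rw [Finset.sum_biUnion]
  · apply Finset.sum_congr rfl
    intro π _
    apply Finset.sum_image
    intro x _ y _ h
    have := List.append_cancel_left h
    simpa using this
  · intro π _ π' _ hne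
    simp only [Function.onFun]
    rw [Finset.disjoint_left]
    intro w hw hw'
    rw [Finset.mem_image] at hw hw'
    obtain ⟨c, -, rfl⟩ := hw
    obtain ⟨c', -, heq⟩ := hw'
    exact hne ((List.append_inj' heq (by simp)).1).symm

-- === inner sums ===

lemma inner_sum_trun {n : ℕ} (hn : 1 ≤ n) {π : List ℕ} (hπ : π ∈ FlatCat n) :
    ∑ c ∈ Finset.Icc (aa π) (ll π + 1), trun (π ++ [c]) = 3 * trun π := by
  obtain ⟨hlen, hcat, hflat⟩ := hπ
  have hne : π ≠ [] := hcat.1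
  have ha1 : 1 ≤ aa π := one_le_aa hne hcat
  have hal : aa π ≤ ll π := aa_le_ll hne hcat
  set a := aa π with h_a
  set l := ll π with h_l
  have hcatl : IsCatalan (π ++ [l]) :=
    ((ext_mem_iff hn ⟨hlen, hcat, hflat⟩ l).2 ⟨hal, by omega⟩).2.1
  have hcatl1 : IsCatalan (π ++ [l + 1]) :=
    ((ext_mem_iff hn ⟨hlen, hcat, hflat⟩ (l + 1)).2 ⟨by omega, le_refl _⟩).2.1
  have hsplit : Finset.Icc a (l + 1) = insert (l + 1) (insert l (Finset.Icc a (l - 1))) := by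
    ext x
    simp only [Finset.mem_Icc, Finset.mem_insert]
    omega
  rw [hsplit, Finset.sum_insert (by simp only [Finset.mem_Icc, Finset.mem_insert]; omega),
    Finset.sum_insert (by simp only [Finset.mem_Icc]; omega)]
  have e1 : trun (π ++ [l + 1]) = l + 2 - a := by
    rw [trun_ext_high hne hcat (by omega) hcatl1]
  have e2 : trun (π ++ [l]) = l + 1 - a := by
    rw [trun_ext_high hne hcat (le_refl _) hcatl]
  have e3 : ∑ c ∈ Finset.Icc a (l - 1), trun (π ++ [c]) = l - a := by
    rw [Finset.sum_congr rfl (fun c hc => ?_), Finset.sum_const, smul_eq_mul, mul_one,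
      Nat.card_Icc]
    · omega
    · rw [Finset.mem_Icc] at hc
      exact trun_ext_low hne hcat (by omega)
  rw [e1, e2, e3, trun_eq hne hcat]
  omega

lemma inner_card {n : ℕ} (hn : 1 ≤ n) {π : List ℕ} (hπ : π ∈ FlatCat n) :
    ∑ _c ∈ Finset.Icc (aa π) (ll π + 1), 1 = trun π + 1 := by
  obtain ⟨hlen, hcat, hflat⟩ := hπ
  have hne : π ≠ [] := hcat.1
  have ha1 : 1 ≤ aa π := one_le_aa hne hcat
  have hal : aa π ≤ ll π := aa_le_ll hne hcat
  rw [Finset.sum_const, smul_eq_mul, mul_one, Nat.card_Icc, trun_eq hne hcat]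
  omega

-- === base case ===

lemma flatCat_one : FlatCat 1 = {[1]} := by
  ext w
  constructor
  · rintro ⟨hlen, hcat, -⟩
    obtain ⟨x, rfl⟩ := List.length_eq_one_iff.1 hlen
    have : x = 1 := hcat.2.1
    rw [this]; rfl
  · rintro rfl
    refine ⟨rfl, ⟨by simp, rfl, by intro i hi; simp at hi⟩, ?_⟩
    intro i j hi hj _
    have hi0 : i = 0 := by have := hi.1; simp at this; omega
    have hj0 : j = 0 := by have := hj.1; simp at this; omega
    rw [hi0, hj0]

lemma trun_one : trun [1] = 1 := by
  have hcat : IsCatalan [1] := ⟨by simp, rfl, by intro i hi; simp at hi⟩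
  have hlrs : lrs [1] = 0 := lrs_eq (List.isChain_singleton 1) (Or.inl rfl)
  rw [trun_eq (by simp) hcat, ll, aa, hlrs]
  rfl

-- === main induction ===

lemma main_counts : ∀ n : ℕ, 1 ≤ n →
    (∑ w ∈ FCS n, trun w) = 3 ^ (n - 1) ∧ 2 * (FCS n).card = 3 ^ (n - 1) + 1 := by
  intro n
  induction n with
  | zero => omega
  | succ m ih =>
    intro _
    by_cases hm : m = 0
    · subst hm
      have hFCS : FCS 1 = {[1]} := by
        ext w
        rw [mem_FCS, flatCat_one]
        simp
      rw [hFCS]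
      simp [trun_one]
    · have hm1 : 1 ≤ m := by omega
      obtain ⟨hT, hF⟩ := ih hm1
      have h3 : 3 ^ m = 3 * 3 ^ (m - 1) := by
        rw [← pow_succ']
        congr 1
        omega
      constructor
      · rw [sum_FCS_succ hm1 trun,
          Finset.sum_congr rfl (fun π hπ => inner_sum_trun hm1 (mem_FCS.1 hπ)),
          ← Finset.mul_sum, hT]
        simp only [Nat.add_sub_cancel]
        omega
      · rw [Finset.card_eq_sum_ones, sum_FCS_succ hm1 (fun _ => 1),
          Finset.sum_congr rfl (fun π hπ => inner_card hm1 (mem_FCS.1 hπ)),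
          Finset.sum_add_distrib, hT, ← Finset.card_eq_sum_ones]
        simp only [Nat.add_sub_cancel]
        omega

/-- For every `n ≥ 1`, twice the sum over all flattened Catalan words of
length `n` of `trun(π) − 1` equals `3^(n−1) − 1`. -/
theorem sum_trun_sub_one (n : ℕ) (hn : 1 ≤ n) :
    2 * (∑ᶠ w ∈ FlatCat n, (trun w - 1)) = 3 ^ (n - 1) - 1 := by
  obtain ⟨hT, hF⟩ := main_counts n hn
  have hcoe : FlatCat n = ↑(FCS n) := (Set.Finite.coe_toFinset _).symm
  rw [hcoe, finsum_mem_coe_finset]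
  have h1 : ∀ w ∈ FCS n, 1 ≤ trun w := by
    intro w hw
    obtain ⟨hlen, hcat, -⟩ := mem_FCS.1 hw
    have hne : w ≠ [] := hcat.1
    have := aa_le_ll hne hcat
    have := one_le_aa hne hcat
    rw [trun_eq hne hcat]
    omega
  have h2 : ∑ w ∈ FCS n, (trun w - 1) + (FCS n).card = ∑ w ∈ FCS n, trun w := by
    rw [Finset.card_eq_sum_ones, ← Finset.sum_add_distrib]
    exact Finset.sum_congr rfl (fun w hw => by have := h1 w hw; omega)
  have h3 : 1 ≤ 3 ^ (n - 1) := Nat.one_le_pow _ _ (by norm_num)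
  omega
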